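/- For all real x > 0 and y ≥ 0, the Lyapunov-derivative expression for the predator-free equilibrium satisfies ((x - K)/x)·(r x (1 - x/K) - α(1-c) x y/(1 + α(1-c) h x)) + (1/θ)·(θ α(1-c) x y/(1 + α(1-c) h x) - d y) ≤ -(r/K)(x - K)² + (α K (1-c) - d/θ) y. In particular, if α K (1-c) ≤ d/θ, then the left-hand side is ≤ 0 for all x > 0, y ≥ 0. -/
import Mathlib


/-- Lyapunov-derivative estimate for the predator-free equilibrium (K,0),
and nonpositivity of the Lyapunov derivative when αK(1-c) ≤ d/θ. -/
theorem lyapunov_estimate_predator_free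
    (r K α h d θ c : ℝ)
    (hr : 0 < r) (hK : 0 < K) (hα : 0 < α) (hh : 0 < h) (hd : 0 < d)
    (hθ0 : 0 < θ) (hθlt : θ < 1) (hc0 : 0 < c) (hclt : c < 1) :
    (∀ x y : ℝ, 0 < x → 0 ≤ y →
      ((x - K) / x) * (r * x * (1 - x / K) - α * (1 - c) * x * y / (1 + α * (1 - c) * h * x)) +
        (1 / θ) * (θ * α * (1 - c) * x * y / (1 + α * (1 - c) * h * x) - d * y) ≤
      -(r / K) * (x - K) ^ 2 + (α * K * (1 - c) - d / θ) * y) ∧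
    (α * K * (1 - c) ≤ d / θ →
      ∀ x y : ℝ, 0 < x → 0 ≤ y →
        ((x - K) / x) * (r * x * (1 - x / K) - α * (1 - c) * x * y / (1 + α * (1 - c) * h * x)) +
          (1 / θ) * (θ * α * (1 - c) * x * y / (1 + α * (1 - c) * h * x) - d * y) ≤ 0) := by
  have hA : 0 < α * (1 - c) := mul_pos hα (by linarith)
  have main : ∀ x y : ℝ, 0 < x → 0 ≤ y →
      ((x - K) / x) * (r * x * (1 - x / K) - α * (1 - c) * x * y / (1 + α * (1 - c) * h * x)) +
        (1 / θ) * (θ * α * (1 - c) * x * y / (1 + α * (1 - c) * h * x) - d * y) ≤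
      -(r / K) * (x - K) ^ 2 + (α * K * (1 - c) - d / θ) * y := by
    intro x y hx hy
    have hD : (0:ℝ) < 1 + α * (1 - c) * h * x := by positivity
    have key : ((x - K) / x) * (r * x * (1 - x / K) - α * (1 - c) * x * y / (1 + α * (1 - c) * h * x)) +
        (1 / θ) * (θ * α * (1 - c) * x * y / (1 + α * (1 - c) * h * x) - d * y)
        = -(r / K) * (x - K) ^ 2 + α * (1 - c) * K * y / (1 + α * (1 - c) * h * x) - d / θ * y := by
      field_simp
      ring
    rw [key]
    have h1 : α * (1 - c) * K * y / (1 + α * (1 - c) * h * x) ≤ α * (1 - c) * K * y := by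
      have hnum : 0 ≤ α * (1 - c) * K * y := by positivity
      calc α * (1 - c) * K * y / (1 + α * (1 - c) * h * x)
          ≤ α * (1 - c) * K * y / 1 := by
            apply div_le_div_of_nonneg_left hnum one_pos
            nlinarith [mul_pos (mul_pos hA hh) hx]
        _ = α * (1 - c) * K * y := by ring
    nlinarith [h1]
  refine ⟨main, fun hle x y hx hy => ?_⟩
  have := main x y hx hy
  have h2 : (α * K * (1 - c) - d / θ) * y ≤ 0 :=
    mul_nonpos_of_nonpos_of_nonneg (by linarith) hy
  nlinarith [sq_nonneg (x - K), div_pos hr hK]
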